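/- If ξ = (ξ_1, ..., ξ_{d−1}, 1) lies in an n-dimensional completely irrational subspace L of R^d, then the Q-linear dimension of the set of coordinates {ξ_1, ..., ξ_{d−1}, 1} is at least d − n. -/

import Mathlib

/-- A vector in `ℝ^d` has integer coordinates. -/
def IsIntegerVec {d : ℕ} (v : Fin d → ℝ) : Prop := ∀ i, ∃ k : ℤ, v i = (k : ℝ)

/-- A subspace of `ℝ^d` is rational if it has a basis consisting of integer vectors. -/
def IsRationalSubspace {d : ℕ} (M : Submodule ℝ (Fin d → ℝ)) : Prop :=
  ∃ s : Set (Fin d → ℝ), s.Finite ∧ (∀ v ∈ s, IsIntegerVec v) ∧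
    LinearIndependent ℝ ((↑) : s → (Fin d → ℝ)) ∧ Submodule.span ℝ s = M

lemma rat_den_mul_int (q : ℚ) (k : ℕ) (h : q.den ∣ k) : ∃ z : ℤ, (k : ℚ) * q = z := by
  obtain ⟨t, ht⟩ := h
  refine ⟨q.num * t, ?_⟩
  have hdne : ((q.den : ℚ)) ≠ 0 := Nat.cast_ne_zero.mpr q.den_nz
  have h1 : (q.num : ℚ) = q * q.den := (div_eq_iff hdne).mp q.num_div_den
  have hden : ((q.den : ℚ)) * q = q.num := by rw [h1]; ring
  subst ht
  push_cast
  rw [mul_comm (q.den : ℚ) (t : ℚ), mul_assoc, hden]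
  ring

/-- If `ξ = (ξ_1, ..., ξ_{d−1}, 1)` lies in an `n`-dimensional completely irrational subspace
`L ⊆ ℝ^d` (one meeting every rational subspace of dimension `d − n` only in `{0}`), then the
`ℚ`-linear dimension of the span of the coordinates `ξ_1, ..., ξ_{d−1}, 1` is at least `d − n`. -/
theorem stmt13 (d n : ℕ) (hn : 0 < n) (hnd : n < d)
    (L : Submodule ℝ (Fin d → ℝ)) (hLdim : Module.finrank ℝ L = n)
    (hCI : ∀ M : Submodule ℝ (Fin d → ℝ),
      IsRationalSubspace M → Module.finrank ℝ M = d - n → L ⊓ M = ⊥)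
    (ξ : Fin d → ℝ) (hlast : ξ ⟨d - 1, by omega⟩ = 1) (hξL : ξ ∈ L) :
    d - n ≤ Module.finrank ℚ (Submodule.span ℚ (Set.range ξ)) := by
  classical
  by_contra hcon
  push_neg at hcon
  set V := Submodule.span ℚ (Set.range ξ) with hV
  haveI : FiniteDimensional ℚ V := FiniteDimensional.span_of_finite ℚ (Set.finite_range ξ)
  set m := Module.finrank ℚ V with hm
  set b := Module.finBasis ℚ V with hb
  set a : Fin d → Fin m → ℚ := fun i j =>
    b.repr ⟨ξ i, Submodule.subset_span (Set.mem_range_self i)⟩ j with ha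
  have hξi : ∀ i, ξ i = ∑ j, (a i j : ℝ) * ((b j : V) : ℝ) := by
    intro i
    have h1 := b.sum_repr ⟨ξ i, Submodule.subset_span (Set.mem_range_self i)⟩
    have h2 := congrArg (Subtype.val) h1
    simp only [AddSubmonoidClass.coe_finset_sum, SetLike.val_smul, Rat.smul_def] at h2
    exact h2.symm
  -- clear denominators
  set N : Fin m → ℕ := fun j => ∏ i, (a i j).den with hN
  have hNpos : ∀ j, 0 < N j := fun j => Finset.prod_pos (fun i _ => (a i j).pos)
  set u : Fin m → (Fin d → ℝ) := fun j i => (N j : ℝ) * (a i j : ℝ) with hu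
  have huint : ∀ j, IsIntegerVec (u j) := by
    intro j i
    obtain ⟨z, hz⟩ := rat_den_mul_int (a i j) (N j) (Finset.dvd_prod_of_mem _ (Finset.mem_univ i))
    exact ⟨z, by simp only [hu]; exact_mod_cast congrArg (fun q : ℚ => (q : ℝ)) hz⟩
  have hξmem : ξ ∈ Submodule.span ℝ (Set.range u) := by
    have hξeq : ξ = ∑ j, (((b j : V) : ℝ) / (N j : ℝ)) • u j := by
      funext i
      rw [Finset.sum_apply]
      rw [hξi i]
      refine Finset.sum_congr rfl fun j _ => ?_
      have hNne : (N j : ℝ) ≠ 0 := Nat.cast_ne_zero.mpr (hNpos j).ne'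
      simp only [Pi.smul_apply, smul_eq_mul, hu]
      field_simp
    rw [hξeq]
    exact Submodule.sum_mem _ fun j _ =>
      Submodule.smul_mem _ _ (Submodule.subset_span (Set.mem_range_self j))
  -- the spanning set
  set T : Set (Fin d → ℝ) :=
    Set.range u ∪ Set.range (fun i : Fin d => (Pi.single i 1 : Fin d → ℝ)) with hT
  have hTspan : Submodule.span ℝ T = ⊤ := by
    rw [eq_top_iff]
    rw [← (Pi.basisFun ℝ (Fin d)).span_eq]
    refine Submodule.span_mono ?_
    intro x hx
    obtain ⟨i, rfl⟩ := hx
    exact Or.inr ⟨i, by simp [Pi.basisFun_apply]⟩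
  have hTint : ∀ v ∈ T, IsIntegerVec v := by
    rintro v (⟨j, rfl⟩ | ⟨i, rfl⟩)
    · exact huint j
    · intro i'
      rcases eq_or_ne i' i with h | h
      · exact ⟨1, by subst h; simp⟩
      · exact ⟨0, by simp [Pi.single_apply, h]⟩
  obtain ⟨s, hsU, hspan_s, hli_s⟩ := exists_linearIndependent ℝ (Set.range u)
  have hsT : s ⊆ T := hsU.trans Set.subset_union_left
  set B := (show LinearIndepOn ℝ id s from hli_s).extend hsT with hB
  have hBli : LinearIndependent ℝ ((↑) : B → (Fin d → ℝ)) := ((show LinearIndepOn ℝ id s from hli_s).linearIndepOn_extend hsT).linearIndependent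
  have hsB : s ⊆ B := (show LinearIndepOn ℝ id s from hli_s).subset_extend hsT
  have hBT : B ⊆ T := (show LinearIndepOn ℝ id s from hli_s).extend_subset hsT
  have hBspan : Submodule.span ℝ B = ⊤ := by
    rw [(show LinearIndepOn ℝ id s from hli_s).span_extend_eq_span hsT, hTspan]
  have hBfin : B.Finite := hBli.setFinite
  have hsfin : s.Finite := (Set.finite_range u).subset hsU
  haveI : Fintype B := hBfin.fintype
  haveI : Fintype s := hsfin.fintype
  have hBcard : B.toFinset.card = d := by
    have h1 := finrank_span_set_eq_card hBli
    rw [hBspan] at h1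
    simp only [finrank_top] at h1
    rw [← h1]
    simp [Module.finrank_fintype_fun_eq_card]
  have hscard : s.toFinset.card ≤ m := by
    have h1 := finrank_span_set_eq_card hli_s
    have h2 : Module.finrank ℝ (Submodule.span ℝ (Set.range u)) ≤ m := by
      have := finrank_span_le_card (R := ℝ) (Set.range u)
      refine this.trans ?_
      rw [Set.toFinset_range]
      exact (Finset.card_image_le).trans (by simp)
    rw [hspan_s] at h1
    omega
  have hsBF : s.toFinset ⊆ B.toFinset := by
    intro x hx
    rw [Set.mem_toFinset] at *
    exact hsB hx
  obtain ⟨cF, hscF, hcFB, hcFcard⟩ :=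
    Finset.exists_subsuperset_card_eq (n := d - n - s.toFinset.card + s.toFinset.card) hsBF
      (by omega) (by rw [hBcard]; omega)
  have hcFcard' : cF.card = d - n := by omega
  have hcFB' : (cF : Set (Fin d → ℝ)) ⊆ B := by
    intro x hx
    have := hcFB hx
    rwa [Set.mem_toFinset] at this
  set M := Submodule.span ℝ (cF : Set (Fin d → ℝ)) with hM
  have hcFli : LinearIndependent ℝ ((↑) : ↥(cF : Set (Fin d → ℝ)) → (Fin d → ℝ)) :=
    (show LinearIndepOn ℝ id B from hBli).mono hcFB'
  have hMrat : IsRationalSubspace M :=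
    ⟨cF, cF.finite_toSet, fun v hv => hTint v (hBT (hcFB' hv)), hcFli, rfl⟩
  have hMrank : Module.finrank ℝ M = d - n := by
    haveI : Fintype ↥(cF : Set (Fin d → ℝ)) := FinsetCoe.fintype cF
    rw [hM, finrank_span_set_eq_card hcFli]
    have hts : ((cF : Set (Fin d → ℝ))).toFinset = cF := by ext x; simp
    rw [hts]
    exact hcFcard'
  have hξM : ξ ∈ M := by
    have h1 : ξ ∈ Submodule.span ℝ s := hspan_s ▸ hξmem
    refine Submodule.span_mono ?_ h1
    intro x hx
    have : x ∈ s.toFinset := Set.mem_toFinset.mpr hx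
    exact hscF this
  have hbot := hCI M hMrat hMrank
  have : ξ ∈ L ⊓ M := ⟨hξL, hξM⟩
  rw [hbot, Submodule.mem_bot] at this
  rw [this] at hlast
  simp at hlast
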